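/- Let p be prime, and suppose F_{p^m} has a basis {e₁,...,e_m} over F_p and trace function tr with tr(e_t e_s) = δ_{ts}. Let C ⊆ F_{p^m}^n be a linear code with Euclidean dual C^⊥, and 𝒞 = C × C^⊥ ⊆ F_{p^m}^{2n}. Then the Construction A lattice Λ(𝒞) ⊆ R^{2nm}, with bilinear form given by the off-diagonal Lorentzian metric tensored with the identity, is even and self-dual. -/

import Mathlib

open scoped BigOperators

noncomputable section

/-- Euclidean dual of a linear code over `F_{p^m}`. -/
def euclDualF (p m n : ℕ) [Fact p.Prime]
    (C : Submodule (GaloisField p m) (Fin n → GaloisField p m)) :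
    Set (Fin n → GaloisField p m) :=
  { b | ∀ a ∈ C, ∑ i, a i * b i = 0 }

/-- Construction A lattice of the CSS code `C × C^⊥` over `F_{p^m}`: expand codeword
coordinates in the basis `e`, lift the `F_p`-coefficients to integers, scale by `1/√p`. -/
def cssLatticeF (p m n : ℕ) [Fact p.Prime]
    (e : Module.Basis (Fin m) (ZMod p) (GaloisField p m))
    (C : Submodule (GaloisField p m) (Fin n → GaloisField p m)) :
    Set ((Fin n × Fin m → ℝ) × (Fin n × Fin m → ℝ)) :=
  { x | ∃ a ∈ C, ∃ b ∈ euclDualF p m n C, ∃ l₁ l₂ : Fin n × Fin m → ℤ,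
      (∀ it : Fin n × Fin m,
        x.1 it = (((e.repr (a it.1) it.2).val : ℝ) + p * l₁ it) / Real.sqrt p) ∧
      (∀ it : Fin n × Fin m,
        x.2 it = (((e.repr (b it.1) it.2).val : ℝ) + p * l₂ it) / Real.sqrt p) }

/-- Off-diagonal Lorentzian form tensored with the identity on `ℝ^{nm} × ℝ^{nm}`. -/
def lorF {n m : ℕ} (x y : (Fin n × Fin m → ℝ) × (Fin n × Fin m → ℝ)) : ℝ :=
  ∑ it : Fin n × Fin m, (x.1 it * y.2 it + y.1 it * x.2 it)

/-! ### Auxiliary lemmas -/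

lemma cssAux_trace_prod (p m : ℕ) [Fact p.Prime]
    (e : Module.Basis (Fin m) (ZMod p) (GaloisField p m))
    (tr : GaloisField p m →ₗ[ZMod p] ZMod p)
    (htr : ∀ t s : Fin m, tr (e t * e s) = if t = s then 1 else 0)
    (c d : GaloisField p m) :
    tr (c * d) = ∑ t, e.repr c t * e.repr d t := by
  conv_lhs => rw [← e.sum_repr c, ← e.sum_repr d]
  rw [Finset.sum_mul_sum]
  simp only [smul_mul_smul_comm, map_sum, map_smul, smul_eq_mul, htr]
  simp [Finset.sum_ite_eq, mul_comm]

lemma cssAux_trace_nondeg (p m : ℕ) [Fact p.Prime]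
    (e : Module.Basis (Fin m) (ZMod p) (GaloisField p m))
    (tr : GaloisField p m →ₗ[ZMod p] ZMod p)
    (htr : ∀ t s : Fin m, tr (e t * e s) = if t = s then 1 else 0)
    (s : GaloisField p m) (h : ∀ c, tr (c * s) = 0) : s = 0 := by
  have h2 : ∀ t, e.repr s t = 0 := by
    intro t
    have := h (e t)
    rw [cssAux_trace_prod p m e tr htr] at this
    simpa [Module.Basis.repr_self, Finsupp.single_apply] using this
  have : e.repr s = 0 := by ext t; exact h2 t
  simpa using congrArg e.repr.symm this

lemma cssAux_sum_val_dvd (p m n : ℕ) [Fact p.Prime]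
    (e : Module.Basis (Fin m) (ZMod p) (GaloisField p m))
    (tr : GaloisField p m →ₗ[ZMod p] ZMod p)
    (htr : ∀ t s : Fin m, tr (e t * e s) = if t = s then 1 else 0)
    (a b : Fin n → GaloisField p m) (hab : ∑ i, a i * b i = 0) :
    (p:ℤ) ∣ ∑ it : Fin n × Fin m,
      (((e.repr (a it.1) it.2).val : ℤ) * ((e.repr (b it.1) it.2).val : ℤ)) := by
  rw [← ZMod.intCast_zmod_eq_zero_iff_dvd]
  push_cast
  simp only [ZMod.natCast_val, ZMod.cast_id]
  rw [Fintype.sum_prod_type]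
  have h1 : ∀ i ∈ Finset.univ, ∑ t, e.repr (a i) t * e.repr (b i) t = tr (a i * b i) :=
    fun i _ => (cssAux_trace_prod p m e tr htr (a i) (b i)).symm
  rw [Finset.sum_congr rfl h1, ← map_sum, hab, map_zero]

lemma cssAux_lor_eq {n m : ℕ} (p : ℕ) (hp : 0 < p) (U V U' V' : Fin n × Fin m → ℤ)
    (x y : (Fin n × Fin m → ℝ) × (Fin n × Fin m → ℝ))
    (hx1 : ∀ it, x.1 it = (U it : ℝ) / Real.sqrt p)
    (hx2 : ∀ it, x.2 it = (V it : ℝ) / Real.sqrt p)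
    (hy1 : ∀ it, y.1 it = (U' it : ℝ) / Real.sqrt p)
    (hy2 : ∀ it, y.2 it = (V' it : ℝ) / Real.sqrt p) :
    lorF x y = ((∑ it : Fin n × Fin m, (U it * V' it + U' it * V it) : ℤ) : ℝ) / p := by
  have hp' : (0:ℝ) ≤ (p:ℝ) := by positivity
  unfold lorF
  push_cast
  rw [Finset.sum_div]
  refine Finset.sum_congr rfl fun it _ => ?_
  rw [hx1, hx2, hy1, hy2, div_mul_div_comm, div_mul_div_comm,
    Real.mul_self_sqrt hp', ← add_div]

lemma cssAux_expand_dvd {ι : Type*} [Fintype ι] (p : ℕ) (A B L L' : ι → ℤ)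
    (h : (p:ℤ) ∣ ∑ it, A it * B it) :
    (p:ℤ) ∣ ∑ it, (A it + p * L it) * (B it + p * L' it) := by
  have he : ∑ it, (A it + p * L it) * (B it + p * L' it)
      = ∑ it, A it * B it
        + p * ∑ it, (A it * L' it + L it * B it + p * (L it * L' it)) := by
    rw [Finset.mul_sum, ← Finset.sum_add_distrib]
    exact Finset.sum_congr rfl fun it _ => by ring
  rw [he]
  exact dvd_add h (Dvd.intro _ rfl)

abbrev cssAux_dotB (p m n : ℕ) [Fact p.Prime] :
    LinearMap.BilinForm (GaloisField p m) (Fin n → GaloisField p m) :=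
  LinearMap.mk₂ _ (fun a b => ∑ i, a i * b i)
    (fun a a' b => by simp [add_mul, Finset.sum_add_distrib])
    (fun c a b => by simp [Finset.mul_sum, mul_assoc])
    (fun a b b' => by simp [mul_add, Finset.sum_add_distrib])
    (fun c a b => by simp [Finset.mul_sum]; ring_nf; simp [mul_comm, mul_left_comm])

lemma cssAux_dotB_refl (p m n : ℕ) [Fact p.Prime] : (cssAux_dotB p m n).IsRefl := by
  intro a b h
  simpa [mul_comm] using h

lemma cssAux_dotB_nondeg (p m n : ℕ) [Fact p.Prime] : (cssAux_dotB p m n).Nondegenerate := by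
  refine (LinearMap.IsRefl.nondegenerate_iff_separatingLeft (cssAux_dotB_refl p m n)).mpr ?_
  intro a h
  funext i
  simpa [Finset.sum_ite_eq, Pi.single_apply, mul_comm] using h (Pi.single i 1)

lemma cssAux_double_orth (p m n : ℕ) [Fact p.Prime]
    (C : Submodule (GaloisField p m) (Fin n → GaloisField p m))
    (a : Fin n → GaloisField p m)
    (h : ∀ b ∈ (cssAux_dotB p m n).orthogonal C, ∑ i, a i * b i = 0) : a ∈ C := by
  rw [← LinearMap.BilinForm.orthogonal_orthogonal (cssAux_dotB_nondeg p m n)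
    (cssAux_dotB_refl p m n) C]
  intro b hb
  exact cssAux_dotB_refl p m n a b (h b hb)

theorem cssLatticeF_even_self_dual (p m n : ℕ) [Fact p.Prime]
    (e : Module.Basis (Fin m) (ZMod p) (GaloisField p m))
    (tr : GaloisField p m →ₗ[ZMod p] ZMod p)
    (htr : ∀ t s : Fin m, tr (e t * e s) = if t = s then 1 else 0)
    (C : Submodule (GaloisField p m) (Fin n → GaloisField p m)) :
    (∀ lam ∈ cssLatticeF p m n e C, ∃ z : ℤ, lorF lam lam = 2 * z) ∧
      cssLatticeF p m n e C =
        { y | ∀ x ∈ cssLatticeF p m n e C, ∃ z : ℤ, lorF x y = z } := by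
  have hp : 0 < p := (Fact.out : p.Prime).pos
  have hpR : (0:ℝ) < (p:ℝ) := by exact_mod_cast hp
  have hpR0 : (p:ℝ) ≠ 0 := ne_of_gt hpR
  have hsq : Real.sqrt p ≠ 0 := by positivity
  -- cross pairing integrality
  have cross : ∀ x ∈ cssLatticeF p m n e C, ∀ y ∈ cssLatticeF p m n e C,
      ∃ z : ℤ, lorF x y = z := by
    rintro x ⟨a, ha, b, hb, l₁, l₂, hx1, hx2⟩ y ⟨a', ha', b', hb', l₁', l₂', hy1, hy2⟩
    set A : Fin n × Fin m → ℤ := fun it => ((e.repr (a it.1) it.2).val : ℤ) with hA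
    set B : Fin n × Fin m → ℤ := fun it => ((e.repr (b it.1) it.2).val : ℤ) with hB
    set A' : Fin n × Fin m → ℤ := fun it => ((e.repr (a' it.1) it.2).val : ℤ) with hA'
    set B' : Fin n × Fin m → ℤ := fun it => ((e.repr (b' it.1) it.2).val : ℤ) with hB'
    have hle := cssAux_lor_eq p hp (fun it => A it + p * l₁ it) (fun it => B it + p * l₂ it)
      (fun it => A' it + p * l₁' it) (fun it => B' it + p * l₂' it) x y
      (fun it => by rw [hx1 it]; congr 1; push_cast [hA]; ring)
      (fun it => by rw [hx2 it]; congr 1; push_cast [hB]; ring)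
      (fun it => by rw [hy1 it]; congr 1; push_cast [hA']; ring)
      (fun it => by rw [hy2 it]; congr 1; push_cast [hB']; ring)
    have hdvd : (p:ℤ) ∣ ∑ it : Fin n × Fin m,
        ((A it + p * l₁ it) * (B' it + p * l₂' it) + (A' it + p * l₁' it) * (B it + p * l₂ it)) := by
      rw [Finset.sum_add_distrib]
      exact dvd_add
        (cssAux_expand_dvd p A B' l₁ l₂' (cssAux_sum_val_dvd p m n e tr htr a b' (hb' a ha)))
        (cssAux_expand_dvd p A' B l₁' l₂ (cssAux_sum_val_dvd p m n e tr htr a' b (hb a' ha')))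
    obtain ⟨z, hz⟩ := hdvd
    refine ⟨z, ?_⟩
    rw [hle, hz]
    push_cast
    field_simp
  constructor
  · -- evenness
    rintro lam ⟨a, ha, b, hb, l₁, l₂, hx1, hx2⟩
    set A : Fin n × Fin m → ℤ := fun it => ((e.repr (a it.1) it.2).val : ℤ) with hA
    set B : Fin n × Fin m → ℤ := fun it => ((e.repr (b it.1) it.2).val : ℤ) with hB
    have hle := cssAux_lor_eq p hp (fun it => A it + p * l₁ it) (fun it => B it + p * l₂ it)
      (fun it => A it + p * l₁ it) (fun it => B it + p * l₂ it) lam lam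
      (fun it => by rw [hx1 it]; congr 1; push_cast [hA]; ring)
      (fun it => by rw [hx2 it]; congr 1; push_cast [hB]; ring)
      (fun it => by rw [hx1 it]; congr 1; push_cast [hA]; ring)
      (fun it => by rw [hx2 it]; congr 1; push_cast [hB]; ring)
    have hdvd : (p:ℤ) ∣ ∑ it : Fin n × Fin m, (A it + p * l₁ it) * (B it + p * l₂ it) :=
      cssAux_expand_dvd p A B l₁ l₂ (cssAux_sum_val_dvd p m n e tr htr a b (hb a ha))
    obtain ⟨z, hz⟩ := hdvd
    refine ⟨z, ?_⟩
    have h2 : ∑ it : Fin n × Fin m,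
        ((A it + p * l₁ it) * (B it + p * l₂ it) + (A it + p * l₁ it) * (B it + p * l₂ it))
        = 2 * ((p:ℤ) * z) := by
      rw [← hz, Finset.sum_add_distrib]; ring
    rw [hle, h2]
    push_cast
    field_simp
  · -- self-duality
    apply Set.Subset.antisymm
    · intro y hy x hx
      exact cross x hx y hy
    · intro y hy
      simp only [Set.mem_setOf_eq] at hy
      -- extract integer coordinates
      have hUex : ∀ it₀ : Fin n × Fin m, ∃ z : ℤ, y.1 it₀ = (z:ℝ) / Real.sqrt p := by
        intro it₀
        set xc : (Fin n × Fin m → ℝ) × (Fin n × Fin m → ℝ) :=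
          (fun _ => 0, fun it => if it = it₀ then (p:ℝ)/Real.sqrt p else 0) with hxc
        have hmem : xc ∈ cssLatticeF p m n e C := by
          refine ⟨0, C.zero_mem, 0, fun a' _ => by simp, 0,
            (fun it => if it = it₀ then 1 else 0), fun it => by simp [hxc], fun it => ?_⟩
          by_cases h : it = it₀ <;> simp [hxc, h]
        obtain ⟨z, hz⟩ := hy xc hmem
        have hval : lorF xc y = Real.sqrt p * y.1 it₀ := by
          unfold lorF
          simp only [hxc, zero_mul, zero_add, mul_ite, mul_zero, ite_mul]
          rw [Finset.sum_ite_eq' Finset.univ it₀ (fun it => y.1 it * ((p:ℝ)/Real.sqrt p))]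
          simp [Real.div_sqrt, mul_comm]
        refine ⟨z, ?_⟩
        rw [eq_div_iff hsq, mul_comm, ← hval, hz]
      have hVex : ∀ it₀ : Fin n × Fin m, ∃ z : ℤ, y.2 it₀ = (z:ℝ) / Real.sqrt p := by
        intro it₀
        set xc : (Fin n × Fin m → ℝ) × (Fin n × Fin m → ℝ) :=
          (fun it => if it = it₀ then (p:ℝ)/Real.sqrt p else 0, fun _ => 0) with hxc
        have hmem : xc ∈ cssLatticeF p m n e C := by
          refine ⟨0, C.zero_mem, 0, fun a' _ => by simp,
            (fun it => if it = it₀ then 1 else 0), 0, fun it => ?_, fun it => by simp [hxc]⟩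
          by_cases h : it = it₀ <;> simp [hxc, h]
        obtain ⟨z, hz⟩ := hy xc hmem
        have hval : lorF xc y = Real.sqrt p * y.2 it₀ := by
          unfold lorF
          simp only [hxc, mul_zero, add_zero, ite_mul, zero_mul]
          rw [Finset.sum_ite_eq' Finset.univ it₀ (fun it => ((p:ℝ)/Real.sqrt p) * y.2 it)]
          simp [Real.div_sqrt]
        refine ⟨z, ?_⟩
        rw [eq_div_iff hsq, mul_comm, ← hval, hz]
      choose U hU using hUex
      choose V hV using hVex
      set abar : Fin n → GaloisField p m :=
        fun i => ∑ t, ((U (i, t) : ZMod p)) • e t with habar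
      set bbar : Fin n → GaloisField p m :=
        fun i => ∑ t, ((V (i, t) : ZMod p)) • e t with hbbar
      have hrepr_a : ∀ it : Fin n × Fin m, e.repr (abar it.1) it.2 = ((U it : ZMod p)) := by
        intro it
        have := congrFun (e.repr_sum_self (fun t => (U (it.1, t) : ZMod p))) it.2
        simpa [habar] using this
      have hrepr_b : ∀ it : Fin n × Fin m, e.repr (bbar it.1) it.2 = ((V it : ZMod p)) := by
        intro it
        have := congrFun (e.repr_sum_self (fun t => (V (it.1, t) : ZMod p))) it.2
        simpa [hbbar] using this
      -- bbar ∈ C^⊥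
      have hbmem : bbar ∈ euclDualF p m n C := by
        intro a ha
        refine cssAux_trace_nondeg p m e tr htr _ (fun c => ?_)
        set xc : (Fin n × Fin m → ℝ) × (Fin n × Fin m → ℝ) :=
          (fun it => ((e.repr ((c • a) it.1) it.2).val : ℝ) / Real.sqrt p, fun _ => 0) with hxc
        have hmem : xc ∈ cssLatticeF p m n e C :=
          ⟨c • a, C.smul_mem c ha, 0, fun a' _ => by simp, 0, 0,
            fun it => by simp [hxc], fun it => by simp [hxc]⟩
        obtain ⟨z, hz⟩ := hy xc hmem
        have hle := cssAux_lor_eq p hp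
          (fun it => ((e.repr ((c • a) it.1) it.2).val : ℤ)) (fun _ => (0:ℤ)) U V xc y
          (fun it => by simp [hxc]) (fun it => by simp [hxc]) hU hV
        rw [hz] at hle
        have hS : ∑ it : Fin n × Fin m,
            (((e.repr ((c • a) it.1) it.2).val : ℤ) * V it + U it * 0) = z * p := by
          have := (div_eq_iff hpR0).mp hle.symm
          exact_mod_cast this
        have h0 : ((∑ it : Fin n × Fin m,
            (((e.repr ((c • a) it.1) it.2).val : ℤ) * V it + U it * 0) : ℤ) : ZMod p) = 0 := by
          rw [ZMod.intCast_zmod_eq_zero_iff_dvd]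
          exact hS ▸ Dvd.intro_left z rfl
        push_cast at h0
        simp only [ZMod.natCast_val, ZMod.cast_id, mul_zero, add_zero] at h0
        simp only [← hrepr_b] at h0
        rw [Fintype.sum_prod_type] at h0
        have hcongr : ∀ i ∈ Finset.univ,
            ∑ t, e.repr ((c • a) i) t * e.repr (bbar i) t = tr ((c • a) i * bbar i) :=
          fun i _ => (cssAux_trace_prod p m e tr htr _ _).symm
        rw [Finset.sum_congr rfl hcongr, ← map_sum] at h0
        have hre : ∑ i, (c • a) i * bbar i = c * ∑ i, a i * bbar i := by
          rw [Finset.mul_sum]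
          exact Finset.sum_congr rfl fun i _ => by
            simp [Pi.smul_apply, smul_eq_mul]; ring
        rwa [hre] at h0
      -- abar ∈ C
      have hamem : abar ∈ C := by
        apply cssAux_double_orth p m n C
        intro b' hb'
        have hb'' : b' ∈ euclDualF p m n C := by
          intro a' ha'
          have := hb' a' ha'
          simpa using this
        refine cssAux_trace_nondeg p m e tr htr _ (fun c => ?_)
        have hcb' : c • b' ∈ euclDualF p m n C := by
          intro a' ha'
          have h1 := hb'' a' ha'
          calc ∑ i, a' i * (c • b') i = c * ∑ i, a' i * b' i := by
                rw [Finset.mul_sum]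
                exact Finset.sum_congr rfl fun i _ => by
                  simp [Pi.smul_apply, smul_eq_mul]; ring
            _ = 0 := by rw [h1, mul_zero]
        set xc : (Fin n × Fin m → ℝ) × (Fin n × Fin m → ℝ) :=
          (fun _ => 0, fun it => ((e.repr ((c • b') it.1) it.2).val : ℝ) / Real.sqrt p) with hxc
        have hmem : xc ∈ cssLatticeF p m n e C :=
          ⟨0, C.zero_mem, c • b', hcb', 0, 0,
            fun it => by simp [hxc], fun it => by simp [hxc]⟩
        obtain ⟨z, hz⟩ := hy xc hmem
        have hle := cssAux_lor_eq p hp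
          (fun _ => (0:ℤ)) (fun it => ((e.repr ((c • b') it.1) it.2).val : ℤ)) U V xc y
          (fun it => by simp [hxc]) (fun it => by simp [hxc]) hU hV
        rw [hz] at hle
        have hS : ∑ it : Fin n × Fin m,
            ((0:ℤ) * V it + U it * ((e.repr ((c • b') it.1) it.2).val : ℤ)) = z * p := by
          have := (div_eq_iff hpR0).mp hle.symm
          exact_mod_cast this
        have h0 : ((∑ it : Fin n × Fin m,
            ((0:ℤ) * V it + U it * ((e.repr ((c • b') it.1) it.2).val : ℤ)) : ℤ) : ZMod p) = 0 := by
          rw [ZMod.intCast_zmod_eq_zero_iff_dvd]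
          exact hS ▸ Dvd.intro_left z rfl
        push_cast at h0
        simp only [ZMod.natCast_val, ZMod.cast_id, zero_mul, zero_add] at h0
        simp only [← hrepr_a] at h0
        rw [Fintype.sum_prod_type] at h0
        have hcongr : ∀ i ∈ Finset.univ,
            ∑ t, e.repr (abar i) t * e.repr ((c • b') i) t = tr (abar i * (c • b') i) :=
          fun i _ => (cssAux_trace_prod p m e tr htr _ _).symm
        rw [Finset.sum_congr rfl hcongr, ← map_sum] at h0
        have hre : ∑ i, abar i * (c • b') i = c * ∑ i, abar i * b' i := by
          rw [Finset.mul_sum]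
          exact Finset.sum_congr rfl fun i _ => by
            simp [Pi.smul_apply, smul_eq_mul]; ring
        rwa [hre] at h0
      -- assemble membership
      set l₁ : Fin n × Fin m → ℤ :=
        fun it => (U it - ((e.repr (abar it.1) it.2).val : ℤ)) / p with hl₁
      set l₂ : Fin n × Fin m → ℤ :=
        fun it => (V it - ((e.repr (bbar it.1) it.2).val : ℤ)) / p with hl₂
      have hdvd₁ : ∀ it, (p:ℤ) ∣ (U it - ((e.repr (abar it.1) it.2).val : ℤ)) := by
        intro it
        rw [← ZMod.intCast_zmod_eq_zero_iff_dvd]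
        push_cast
        simp [ZMod.natCast_val, ZMod.cast_id, hrepr_a]
      have hdvd₂ : ∀ it, (p:ℤ) ∣ (V it - ((e.repr (bbar it.1) it.2).val : ℤ)) := by
        intro it
        rw [← ZMod.intCast_zmod_eq_zero_iff_dvd]
        push_cast
        simp [ZMod.natCast_val, ZMod.cast_id, hrepr_b]
      have heq₁ : ∀ it, ((e.repr (abar it.1) it.2).val : ℤ) + p * l₁ it = U it := by
        intro it
        have := Int.mul_ediv_cancel' (hdvd₁ it)
        simp only [hl₁]
        linarith
      have heq₂ : ∀ it, ((e.repr (bbar it.1) it.2).val : ℤ) + p * l₂ it = V it := by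
        intro it
        have := Int.mul_ediv_cancel' (hdvd₂ it)
        simp only [hl₂]
        linarith
      refine ⟨abar, hamem, bbar, hbmem, l₁, l₂, fun it => ?_, fun it => ?_⟩
      · rw [hU it]
        have : ((U it : ℤ) : ℝ) = ((e.repr (abar it.1) it.2).val : ℝ) + p * l₁ it := by
          rw [← heq₁ it]; push_cast; ring
        rw [this]
      · rw [hV it]
        have : ((V it : ℤ) : ℝ) = ((e.repr (bbar it.1) it.2).val : ℝ) + p * l₂ it := by
          rw [← heq₂ it]; push_cast; ring
        rw [this]

end
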